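/- Let k ≥ 1 and let f : ℂ^k → ℂ^k be an entire (everywhere holomorphic) map with f'(0) = Id such that for some constant C > 0 and every z ∈ ℂ^k the derivative f'(z) is invertible and ‖f'(z)‖ · ‖f'(z)⁻¹‖ ≤ C. Then f(ℂ^k) contains open balls of arbitrarily large radius: for every R > 0 there is a point a ∈ ℂ^k with B(a, R) ⊆ f(ℂ^k). -/

import Mathlib

open Metric

/-- Directional Cauchy–Schwarz-type estimate for an entire map: if `h` moves points of the
complex line `z + s • v` (for `‖s‖ < r`) by at most `B` away from `h z`, then the directional
derivative of `h` at `z` in the direction `v` has norm at most `B / r`. -/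
private lemma dir_deriv_bound {E : Type*} [NormedAddCommGroup E] [NormedSpace ℂ E]
    {h : E → E} (hh : Differentiable ℂ h) (z v : E) {r B : ℝ} (hr : 0 < r) (_hB : 0 ≤ B)
    (hbound : ∀ s : ℂ, ‖s‖ < r → ‖h (z + s • v) - h z‖ ≤ B) :
    ‖fderiv ℂ h z v‖ ≤ B / r := by
  set q : ℂ → E := fun s => h (z + s • v) with hq_def
  have hline : Differentiable ℂ fun s : ℂ => z + s • v :=
    ((differentiable_id).smul_const v).const_add z
  have hq : Differentiable ℂ q := hh.comp hline
  have hc : HasDerivAt (fun s : ℂ => z + s • v) v 0 := by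
    simpa using (((hasDerivAt_id (0 : ℂ)).smul_const v).const_add z)
  have h0 : z + (0 : ℂ) • v = z := by simp
  have hq0 : HasDerivAt q (fderiv ℂ h z v) 0 := by
    have := (hh (z + (0 : ℂ) • v)).hasFDerivAt.comp_hasDerivAt (0 : ℂ) hc
    rwa [h0] at this
  have hq00 : q 0 = h z := by simp [hq_def]
  have key : ∀ B' : ℝ, B < B' → ‖deriv q 0‖ ≤ B' / r := by
    intro B' hB'
    refine Complex.norm_deriv_le_div_of_mapsTo_ball (hq.differentiableOn) ?_ hr
    intro s hs
    rw [mem_closedBall]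
    have : ‖q s - q 0‖ ≤ B := by
      rw [hq00]; exact hbound s (by simpa using hs)
    rw [dist_eq_norm]
    exact le_trans this hB'.le
  have hderiv : deriv q 0 = fderiv ℂ h z v := hq0.deriv
  rw [← hderiv]
  by_contra hcon
  push_neg at hcon
  have h1 : B < ‖deriv q 0‖ * r := by
    rw [div_lt_iff₀ hr] at hcon; linarith
  have h2 := key ((B + ‖deriv q 0‖ * r) / 2) (by linarith)
  rw [le_div_iff₀ hr] at h2
  linarith

set_option maxHeartbeats 1000000 in
/-- **Corollary to Landau's theorem.** An entire map `f : ℂᵏ → ℂᵏ` with `f'(0) = Id` and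
uniformly bounded distortion `‖f'(z)‖ ⬝ ‖f'(z)⁻¹‖ ≤ C` has balls of arbitrarily large
radius in its image. -/
theorem landau_corollary (k : ℕ) (hk : 1 ≤ k)
    (f : EuclideanSpace ℂ (Fin k) → EuclideanSpace ℂ (Fin k))
    (hf : Differentiable ℂ f)
    (hf0 : fderiv ℂ f 0 = ContinuousLinearMap.id ℂ (EuclideanSpace ℂ (Fin k)))
    (C : ℝ) (hC : 0 < C)
    (hdist : ∀ z : EuclideanSpace ℂ (Fin k),
      IsUnit (fderiv ℂ f z) ∧ ‖fderiv ℂ f z‖ * ‖Ring.inverse (fderiv ℂ f z)‖ ≤ C) :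
    ∀ R > (0 : ℝ), ∃ a : EuclideanSpace ℂ (Fin k), ball a R ⊆ Set.range f := by
  intro R hR
  haveI hne : Nonempty (Fin k) := ⟨⟨0, hk⟩⟩
  haveI ntE : Nontrivial (EuclideanSpace ℂ (Fin k)) := inferInstance
  set g : EuclideanSpace ℂ (Fin k) →
      (EuclideanSpace ℂ (Fin k) →L[ℂ] EuclideanSpace ℂ (Fin k)) := fun z => fderiv ℂ f z
    with hg_def
  have hone : ‖(1 : EuclideanSpace ℂ (Fin k) →L[ℂ] EuclideanSpace ℂ (Fin k))‖ = 1 := by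
    rw [ContinuousLinearMap.one_def]; exact ContinuousLinearMap.norm_id
  have hlow : ∀ z, (1 : ℝ) ≤ ‖g z‖ * ‖Ring.inverse (g z)‖ := by
    intro z
    have hmul : g z * Ring.inverse (g z) = 1 := Ring.mul_inverse_cancel _ (hdist z).1
    calc (1 : ℝ) = ‖(1 : EuclideanSpace ℂ (Fin k) →L[ℂ] EuclideanSpace ℂ (Fin k))‖ := hone.symm
      _ = ‖g z * Ring.inverse (g z)‖ := by rw [hmul]
      _ ≤ ‖g z‖ * ‖Ring.inverse (g z)‖ := norm_mul_le _ _
  have hinvpos : ∀ z, 0 < ‖Ring.inverse (g z)‖ := by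
    intro z
    by_contra hcon
    push_neg at hcon
    have h0 : ‖Ring.inverse (g z)‖ = 0 := le_antisymm hcon (norm_nonneg _)
    have h1 := hlow z
    rw [h0, mul_zero] at h1
    linarith
  set lam : EuclideanSpace ℂ (Fin k) → ℝ := fun z => ‖Ring.inverse (g z)‖⁻¹ with hlam_def
  have hlam_pos : ∀ z, 0 < lam z := fun z => inv_pos.2 (hinvpos z)
  have hg_le : ∀ z, ‖g z‖ ≤ C * lam z := by
    intro z
    show ‖g z‖ ≤ C * ‖Ring.inverse (g z)‖⁻¹
    rw [mul_comm C, ← div_eq_inv_mul, le_div_iff₀ (hinvpos z)]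
    exact (hdist z).2
  have hlam0 : lam 0 = 1 := by
    have hg0 : g 0 = 1 := by
      show fderiv ℂ f 0 = 1
      rw [hf0, ContinuousLinearMap.one_def]
    show ‖Ring.inverse (g 0)‖⁻¹ = 1
    rw [hg0, Ring.inverse_one, hone, inv_one]
  have hC1 : (1 : ℝ) ≤ C := le_trans (hlow 0) (hdist 0).2
  -- local boundedness of the derivative
  have hgbd : ∀ a : EuclideanSpace ℂ (Fin k),
      ∃ M : ℝ, 0 ≤ M ∧ ∀ z ∈ closedBall a 1, ‖g z‖ ≤ M := by
    intro a
    obtain ⟨Mf, hMf⟩ := (isCompact_closedBall a 3).exists_bound_of_continuousOn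
      ((hf.continuous.sub continuous_const).continuousOn
        (f := fun x => f x - f a))
    have hMf0 : 0 ≤ Mf := le_trans (norm_nonneg _) (hMf a (mem_closedBall_self (by norm_num)))
    refine ⟨2 * Mf, by positivity, fun z hz => ?_⟩
    refine ContinuousLinearMap.opNorm_le_bound _ (by positivity) fun v => ?_
    rcases eq_or_ne v 0 with rfl | hv
    · simp
    have hvn : 0 < ‖v‖ := norm_pos_iff.2 hv
    have key := dir_deriv_bound hf z v (r := ‖v‖⁻¹) (B := 2 * Mf)
      (inv_pos.2 hvn) (by positivity) ?_
    · calc ‖g z v‖ ≤ 2 * Mf / ‖v‖⁻¹ := key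
        _ = 2 * Mf * ‖v‖ := by rw [div_eq_mul_inv, inv_inv]
    · intro s hs
      have hz3 : z + s • v ∈ closedBall a 3 := by
        rw [mem_closedBall_iff_norm] at hz ⊢
        have h1 : ‖s • v‖ ≤ 1 := by
          rw [norm_smul]
          calc ‖s‖ * ‖v‖ ≤ ‖v‖⁻¹ * ‖v‖ := by
                exact mul_le_mul_of_nonneg_right hs.le (norm_nonneg _)
            _ = 1 := inv_mul_cancel₀ hvn.ne'
        calc ‖z + s • v - a‖ = ‖(z - a) + s • v‖ := by congr 1; abel
          _ ≤ ‖z - a‖ + ‖s • v‖ := norm_add_le _ _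
          _ ≤ 1 + 1 := add_le_add hz h1
          _ ≤ 3 := by norm_num
      have hza : z ∈ closedBall a 3 :=
        (closedBall_subset_closedBall (by norm_num : (1:ℝ) ≤ 3)) hz
      calc ‖f (z + s • v) - f z‖
          = ‖(f (z + s • v) - f a) - (f z - f a)‖ := by congr 1; abel
        _ ≤ ‖f (z + s • v) - f a‖ + ‖f z - f a‖ := norm_sub_le _ _
        _ ≤ Mf + Mf := add_le_add (hMf _ hz3) (hMf _ hza)
        _ = 2 * Mf := by ring
  -- difference estimate for the derivative
  have hdiff : ∀ (z₀ : EuclideanSpace ℂ (Fin k)) (t M : ℝ), 0 < t → 0 ≤ M →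
      (∀ z ∈ closedBall z₀ t, ‖g z‖ ≤ M) →
      ∀ z ∈ closedBall z₀ (t / 2), ‖g z - g z₀‖ ≤ 4 * M * ‖z - z₀‖ / t := by
    intro z₀ t M ht hM hMb z hz
    set e : EuclideanSpace ℂ (Fin k) := z - z₀ with he_def
    have he : ‖e‖ ≤ t / 2 := mem_closedBall_iff_norm.1 hz
    set F : EuclideanSpace ℂ (Fin k) → EuclideanSpace ℂ (Fin k) :=
      fun x => f (x + e) - f x with hF_def
    have hFd : Differentiable ℂ F :=
      (hf.comp ((differentiable_id).add_const e)).sub hf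
    have hF' : fderiv ℂ F z₀ = g z - g z₀ := by
      have h1 : HasFDerivAt (fun x => f (x + e)) (g (z₀ + e)) z₀ := by
        have := (hf (z₀ + e)).hasFDerivAt.comp z₀ ((hasFDerivAt_id z₀).add_const e)
        simpa [Function.comp_def] using this
      have hze : z₀ + e = z := by rw [he_def]; abel
      rw [hze] at h1
      exact (h1.sub (hf z₀).hasFDerivAt).fderiv
    -- bound on F on the half ball
    have hFbound : ∀ x ∈ closedBall z₀ (t / 2), ‖F x‖ ≤ M * ‖e‖ := by
      intro x hx
      have hx1 : x ∈ closedBall z₀ t :=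
        (closedBall_subset_closedBall (by linarith)) hx
      have hx2 : x + e ∈ closedBall z₀ t := by
        rw [mem_closedBall_iff_norm] at hx ⊢
        calc ‖x + e - z₀‖ = ‖(x - z₀) + e‖ := by congr 1; abel
          _ ≤ ‖x - z₀‖ + ‖e‖ := norm_add_le _ _
          _ ≤ t / 2 + t / 2 := add_le_add hx he
          _ = t := by ring
      have := (convex_closedBall z₀ t).norm_image_sub_le_of_norm_fderiv_le
        (fun y _ => hf y) (fun y hy => hMb y hy) hx1 hx2
      calc ‖F x‖ = ‖f (x + e) - f x‖ := rfl
        _ ≤ M * ‖x + e - x‖ := this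
        _ = M * ‖e‖ := by rw [add_sub_cancel_left]
    -- directional bound via the one-variable Schwarz estimate
    rw [← hF']
    refine ContinuousLinearMap.opNorm_le_bound _ (by positivity) fun v => ?_
    rcases eq_or_ne v 0 with rfl | hv
    · simp
    have hvn : 0 < ‖v‖ := norm_pos_iff.2 hv
    have hr : 0 < (t / 2) / ‖v‖ := by positivity
    have key := dir_deriv_bound hFd z₀ v (r := (t / 2) / ‖v‖) (B := 2 * (M * ‖e‖))
      hr (by positivity) ?_
    · calc ‖fderiv ℂ F z₀ v‖ ≤ 2 * (M * ‖e‖) / ((t / 2) / ‖v‖) := key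
        _ = 4 * M * ‖e‖ / t * ‖v‖ := by
          field_simp
          ring
    · intro s hs
      have hmem : z₀ + s • v ∈ closedBall z₀ (t / 2) := by
        rw [mem_closedBall_iff_norm]
        rw [add_sub_cancel_left, norm_smul]
        calc ‖s‖ * ‖v‖ ≤ ((t / 2) / ‖v‖) * ‖v‖ :=
              mul_le_mul_of_nonneg_right hs.le (norm_nonneg _)
          _ = t / 2 := div_mul_cancel₀ _ hvn.ne'
      have hmem0 : z₀ ∈ closedBall z₀ (t / 2) := mem_closedBall_self (by linarith)
      calc ‖F (z₀ + s • v) - F z₀‖ ≤ ‖F (z₀ + s • v)‖ + ‖F z₀‖ := norm_sub_le _ _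
        _ ≤ M * ‖e‖ + M * ‖e‖ := add_le_add (hFbound _ hmem) (hFbound _ hmem0)
        _ = 2 * (M * ‖e‖) := by ring
  -- continuity of the derivative
  have hgc : Continuous g := by
    rw [continuous_iff_continuousAt]
    intro a
    obtain ⟨M, hM0, hMb⟩ := hgbd a
    refine continuousAt_of_locally_lipschitz (show (0:ℝ) < 1/2 by norm_num) (4 * M)
      fun y hy => ?_
    have hy' : y ∈ closedBall a ((1:ℝ)/2) := by
      rw [mem_closedBall]; exact hy.le
    have := hdiff a 1 M one_pos hM0 (by simpa using hMb) y (by simpa using hy')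
    rw [dist_eq_norm, dist_eq_norm]
    calc ‖g y - g a‖ ≤ 4 * M * ‖y - a‖ / 1 := this
      _ = 4 * M * ‖y - a‖ := by ring
  -- continuity of lam
  have hlamc : Continuous lam := by
    rw [continuous_iff_continuousAt]
    intro a
    have h1 : ContinuousAt (fun z => Ring.inverse (g z)) a := by
      have hu := (hdist a).1
      have h2 := NormedRing.inverse_continuousAt hu.unit
      rw [IsUnit.unit_spec] at h2
      exact h2.comp hgc.continuousAt
    exact (h1.norm).inv₀ (hinvpos a).ne'
  -- the maximum argument
  set ρ : ℝ := 64 * C * R with hρ_def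
  have hρ : 0 < ρ := by positivity
  set Fcn : EuclideanSpace ℂ (Fin k) → ℝ := fun z => (ρ - ‖z‖) * lam z with hFcn_def
  have hFcnc : Continuous Fcn := (continuous_const.sub continuous_norm).mul hlamc
  obtain ⟨z₀, hz₀mem, hz₀max⟩ := (isCompact_closedBall (0 : EuclideanSpace ℂ (Fin k)) ρ)
    |>.exists_isMaxOn ⟨0, mem_closedBall_self hρ.le⟩ hFcnc.continuousOn
  have hF0 : Fcn 0 = ρ := by simp [hFcn_def, hlam0]
  have hz₀max' : ∀ x ∈ closedBall (0 : EuclideanSpace ℂ (Fin k)) ρ, Fcn x ≤ Fcn z₀ :=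
    isMaxOn_iff.mp hz₀max
  have hFz₀ : ρ ≤ Fcn z₀ := by
    have h := hz₀max' 0 (mem_closedBall_self hρ.le)
    rwa [hF0] at h
  have hlam₀ := hlam_pos z₀
  have hz₀lt : ‖z₀‖ < ρ := by
    by_contra hcon
    push_neg at hcon
    have : Fcn z₀ ≤ 0 :=
      mul_nonpos_of_nonpos_of_nonneg (by linarith) (hlam_pos z₀).le
    linarith
  set t : ℝ := (ρ - ‖z₀‖) / 2 with ht_def
  have ht : 0 < t := by rw [ht_def]; linarith
  have hFz₀' : Fcn z₀ = 2 * t * lam z₀ := by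
    show (ρ - ‖z₀‖) * lam z₀ = 2 * t * lam z₀
    rw [ht_def]; ring
  have htlam : ρ / 2 ≤ t * lam z₀ := by
    rw [hFz₀'] at hFz₀; linarith
  -- derivative bound on the ball around z₀
  have hM : ∀ z ∈ closedBall z₀ t, ‖g z‖ ≤ 2 * C * lam z₀ := by
    intro z hz
    have hzn : ‖z - z₀‖ ≤ t := mem_closedBall_iff_norm.1 hz
    have hzρ : ‖z‖ ≤ ρ - t := by
      calc ‖z‖ = ‖(z - z₀) + z₀‖ := by congr 1; abel
        _ ≤ ‖z - z₀‖ + ‖z₀‖ := norm_add_le _ _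
        _ ≤ t + ‖z₀‖ := by linarith
        _ = ρ - t := by rw [ht_def]; ring
    have hzmem : z ∈ closedBall (0 : EuclideanSpace ℂ (Fin k)) ρ := by
      rw [mem_closedBall_zero_iff]; linarith
    have h2 : Fcn z ≤ Fcn z₀ := hz₀max' z hzmem
    rw [hFz₀'] at h2
    have h3 : t * lam z ≤ (ρ - ‖z‖) * lam z :=
      mul_le_mul_of_nonneg_right (by linarith) (hlam_pos z).le
    have h4 : t * lam z ≤ t * (2 * lam z₀) := by
      calc t * lam z ≤ (ρ - ‖z‖) * lam z := h3
        _ ≤ 2 * t * lam z₀ := h2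
        _ = t * (2 * lam z₀) := by ring
    have h5 : lam z ≤ 2 * lam z₀ := le_of_mul_le_mul_left h4 ht
    calc ‖g z‖ ≤ C * lam z := hg_le z
      _ ≤ C * (2 * lam z₀) := mul_le_mul_of_nonneg_left h5 hC.le
      _ = 2 * C * lam z₀ := by ring
  set ε : ℝ := t / (16 * C) with hε_def
  have hε : 0 < ε := by positivity
  have hε2 : ε ≤ t / 2 := by
    rw [hε_def]
    exact div_le_div_of_nonneg_left ht.le (by norm_num) (by linarith)
  have hLip : ∀ x ∈ closedBall z₀ ε, ‖g x - g z₀‖ ≤ lam z₀ / 2 := by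
    intro x hx
    have hx2 : x ∈ closedBall z₀ (t / 2) := (closedBall_subset_closedBall hε2) hx
    have h1 := hdiff z₀ t (2 * C * lam z₀) ht (by positivity) hM x hx2
    have hxε : ‖x - z₀‖ ≤ ε := mem_closedBall_iff_norm.1 hx
    calc ‖g x - g z₀‖ ≤ 4 * (2 * C * lam z₀) * ‖x - z₀‖ / t := h1
      _ ≤ 4 * (2 * C * lam z₀) * ε / t := by gcongr
      _ = lam z₀ / 2 := by rw [hε_def]; field_simp; ring
  -- the linear equivalence at z₀
  set u : (EuclideanSpace ℂ (Fin k) →L[ℂ] EuclideanSpace ℂ (Fin k))ˣ := (hdist z₀).1.unit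
    with hu_def
  set A : EuclideanSpace ℂ (Fin k) ≃L[ℂ] EuclideanSpace ℂ (Fin k) :=
    ContinuousLinearEquiv.ofUnit u with hA_def
  have hA : (A : EuclideanSpace ℂ (Fin k) →L[ℂ] EuclideanSpace ℂ (Fin k)) = g z₀ := by
    have h1 : (A : EuclideanSpace ℂ (Fin k) →L[ℂ] EuclideanSpace ℂ (Fin k)) = (u : _) :=
      ContinuousLinearMap.ext fun x => rfl
    rw [h1, hu_def]
    exact (hdist z₀).1.unit_spec
  have hAsymm : ‖((A.symm : EuclideanSpace ℂ (Fin k) →L[ℂ] EuclideanSpace ℂ (Fin k)))‖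
      = (lam z₀)⁻¹ := by
    have h1 : (A.symm : EuclideanSpace ℂ (Fin k) →L[ℂ] EuclideanSpace ℂ (Fin k))
        = Ring.inverse (g z₀) := by
      have h2 : (A.symm : EuclideanSpace ℂ (Fin k) →L[ℂ] EuclideanSpace ℂ (Fin k))
          = ((u⁻¹ : _ˣ) : _) :=
        ContinuousLinearMap.ext fun x => rfl
      rw [h2, ← Ring.inverse_unit u, hu_def, IsUnit.unit_spec]
    rw [h1]
    show ‖Ring.inverse (g z₀)‖ = (‖Ring.inverse (g z₀)‖⁻¹)⁻¹
    rw [inv_inv]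
  -- ApproximatesLinearOn
  have hc0 : (0 : ℝ) ≤ lam z₀ / 2 := by linarith
  set c : NNReal := ⟨lam z₀ / 2, hc0⟩ with hc_def
  have happrox : ApproximatesLinearOn f
      (A : EuclideanSpace ℂ (Fin k) →L[ℂ] EuclideanSpace ℂ (Fin k)) (closedBall z₀ ε) c := by
    intro x hx y hy
    have := (convex_closedBall z₀ ε).norm_image_sub_le_of_norm_fderiv_le'
      (φ := (A : _ →L[ℂ] _)) (fun w _ => hf w)
      (fun w hw => by rw [hA]; exact hLip w hw) hy hx
    calc ‖f x - f y - A (x - y)‖ ≤ lam z₀ / 2 * ‖x - y‖ := this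
      _ = (c : ℝ) * ‖x - y‖ := rfl
  -- surjectivity onto a closed ball
  set nri := A.toNonlinearRightInverse with hnri_def
  have hnn : (nri.nnnorm : ℝ) = (lam z₀)⁻¹ := by
    rw [hnri_def]
    show (‖(A.symm : EuclideanSpace ℂ (Fin k) →L[ℂ] EuclideanSpace ℂ (Fin k))‖₊ : ℝ)
        = (lam z₀)⁻¹
    rw [coe_nnnorm, hAsymm]
  have hsurj := happrox.surjOn_closedBall_of_nonlinearRightInverse nri hε.le
    (subset_refl _)
  have hrad : R ≤ ((nri.nnnorm : ℝ)⁻¹ - (c : ℝ)) * ε := by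
    have h1 : ((nri.nnnorm : ℝ)⁻¹ - (c : ℝ)) = lam z₀ / 2 := by
      rw [hnn, inv_inv]
      show lam z₀ - lam z₀ / 2 = lam z₀ / 2
      ring
    rw [h1, hε_def]
    have h2 : lam z₀ / 2 * (t / (16 * C)) = (t * lam z₀) / (32 * C) := by
      field_simp; ring
    rw [h2]
    rw [le_div_iff₀ (by positivity)]
    calc R * (32 * C) = ρ / 2 := by rw [hρ_def]; ring
      _ ≤ t * lam z₀ := htlam
  refine ⟨f z₀, fun y hy => ?_⟩
  have hy' : y ∈ closedBall (f z₀) (((nri.nnnorm : ℝ)⁻¹ - (c : ℝ)) * ε) := by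
    rw [mem_closedBall]
    rw [mem_ball] at hy
    linarith
  obtain ⟨x, _, hxy⟩ := hsurj hy'
  exact ⟨x, hxy⟩
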